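/- World-set relations are a strong representation system for any relational query language: for every N : ℕ, every finset C of padded tuple vectors of length N over a tuple type T, and every function Q : Finset T → Finset T' (an arbitrary query mapping each world to a world over a tuple type T'), there exist N' : ℕ and a finset C' of padded tuple vectors of length N' over T' such that C'.image decode = (C.image decode).image Q. -/

import Mathlib

/-- A padded tuple vector `v : Fin N → Option T` decodes to the finite set of
tuples `t` with `v i = some t` for some `i` (entries `none`, i.e. `⊥`, are
discarded). -/
def decode {T : Type*} [DecidableEq T] {N : ℕ} (v : Fin N → Option T) : Finset T :=
  Finset.univ.biUnion fun i => (v i).toFinset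

lemma decode_encode {T' : Type*} [DecidableEq T'] {N' : ℕ} (W : Finset T')
    (h : W.card ≤ N') : decode (fun i : Fin N' => W.toList[(i : ℕ)]?) = W := by
  ext t
  simp only [decode, Finset.mem_biUnion, Finset.mem_univ, true_and, Option.mem_toFinset,
    Option.mem_def]
  constructor
  · rintro ⟨i, hi⟩
    have := List.mem_of_getElem? hi
    simpa using this
  · intro ht
    have ht' : t ∈ W.toList := by simpa using ht
    obtain ⟨n, hn⟩ := List.mem_iff_getElem?.mp ht'
    have hlt : n < N' := lt_of_lt_of_le (List.getElem?_eq_some_iff.mp hn).1 (by simpa using h)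
    exact ⟨⟨n, hlt⟩, hn⟩

/-- **World-set relations are a strong representation system for any relational
query language**: for every world-set relation `C` (a finset of padded tuple
vectors of length `N` over `T`) and every query `Q : Finset T → Finset T'`
mapping worlds over `T` to worlds over `T'`, there are `N'` and a world-set
relation `C'` over `T'` with `C'.image decode = (C.image decode).image Q`. -/
theorem stmt_2 (N : ℕ) {T T' : Type*} [DecidableEq T] [DecidableEq T']
    (C : Finset (Fin N → Option T)) (Q : Finset T → Finset T') :
    ∃ (N' : ℕ) (C' : Finset (Fin N' → Option T')),
      C'.image decode = (C.image decode).image Q := by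
  classical
  set S := (C.image decode).image Q with hS
  set N' := S.sup Finset.card with hN'
  refine ⟨N', S.image (fun W => (fun i : Fin N' => W.toList[(i : ℕ)]?)), ?_⟩
  rw [Finset.image_image]
  ext W
  simp only [Finset.mem_image, Function.comp_apply]
  constructor
  · rintro ⟨V, hV, rfl⟩
    rw [decode_encode V (Finset.le_sup hV)]
    exact hV
  · intro hW
    exact ⟨W, hW, decode_encode W (Finset.le_sup hW)⟩
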